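/- arXiv:1711.02431 — 2 statements merged into one kernel-verified Lean document; each statement's English description precedes it below -/
import Mathlib

section
/- Let ν be an odd positive integer. Then the Sato–Tate measure of the set I' = ⋃_{j=1}^{(ν+1)/2} ( (2j−1)π/(ν+1), 2jπ/(ν+1) ) equals 1/2; that is, (2/π) · Σ_{j=1}^{(ν+1)/2} ∫_{(2j−1)π/(ν+1)}^{2jπ/(ν+1)} sin²θ dθ = 1/2. -/
lemma sumA (m : ℕ) (hm : 0 < m) :
    ∑ j ∈ Finset.Icc 1 m, Real.sin ((2 * (j : ℝ) - 1) * Real.pi / m) = 0 := by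
  have hmR : (m : ℝ) ≠ 0 := Nat.cast_ne_zero.2 hm.ne'
  refine Finset.sum_involution (fun j _ => m + 1 - j) ?_ ?_ ?_ ?_
  · intro j hj
    simp only [Finset.mem_Icc] at hj
    have h1 : (((m + 1 - j : ℕ)) : ℝ) = (m : ℝ) + 1 - j := by
      push_cast [Nat.cast_sub (by omega : j ≤ m + 1)]; ring
    rw [h1]
    have h2 : (2 * ((m : ℝ) + 1 - j) - 1) * Real.pi / m
        = -((2 * (j : ℝ) - 1) * Real.pi / m) + 2 * Real.pi := by
      field_simp; ring
    rw [h2, Real.sin_add_two_pi, Real.sin_neg]; ring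
  · intro j hj hf heq
    simp only [Finset.mem_Icc] at hj
    apply hf
    have heq' : m + 1 - j = j := heq
    have hmj : m = 2 * j - 1 := by omega
    have hj1 : 1 ≤ j := hj.1
    have hmc : (m : ℝ) = 2 * j - 1 := by
      rw [hmj]; push_cast [Nat.cast_sub (by omega : 1 ≤ 2 * j)]; ring
    have h3 : (2 * (j : ℝ) - 1) * Real.pi / m = Real.pi := by
      rw [hmc]
      have hne : (2 : ℝ) * j - 1 ≠ 0 := by rw [← hmc]; exact hmR
      field_simp
    rw [h3, Real.sin_pi]
  · intro j hj; simp only [Finset.mem_Icc] at hj ⊢; omega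
  · intro j hj; simp only [Finset.mem_Icc] at hj; show m + 1 - (m + 1 - j) = j; omega

lemma sumB (m : ℕ) (hm : 0 < m) :
    ∑ j ∈ Finset.Icc 1 m, Real.sin (2 * (j : ℝ) * Real.pi / m) = 0 := by
  have hmR : (m : ℝ) ≠ 0 := Nat.cast_ne_zero.2 hm.ne'
  have hfm : Real.sin (2 * (m : ℝ) * Real.pi / m) = 0 := by
    have : 2 * (m : ℝ) * Real.pi / m = 2 * Real.pi := by field_simp
    rw [this, Real.sin_two_pi]
  refine Finset.sum_involution (fun j _ => if j = m then m else m - j) ?_ ?_ ?_ ?_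
  · intro j hj
    simp only [Finset.mem_Icc] at hj
    by_cases h : j = m
    · simp [h, hfm]
    · simp only [h, if_false]
      have h1 : (((m - j : ℕ)) : ℝ) = (m : ℝ) - j := by
        push_cast [Nat.cast_sub hj.2]; ring
      rw [h1]
      have h2 : 2 * ((m : ℝ) - j) * Real.pi / m
          = -(2 * (j : ℝ) * Real.pi / m) + 2 * Real.pi := by field_simp; ring
      rw [h2, Real.sin_add_two_pi, Real.sin_neg]; ring
  · intro j hj hf heq
    simp only [Finset.mem_Icc] at hj
    apply hf
    by_cases h : j = m
    · rw [h]; exact hfm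
    · simp only [h, if_false] at heq
      have hm2 : m = 2 * j := by omega
      have hj1 : 1 ≤ j := hj.1
      have hmc : (m : ℝ) = 2 * j := by exact_mod_cast congrArg (Nat.cast (R := ℝ)) hm2
      have h3 : 2 * (j : ℝ) * Real.pi / m = Real.pi := by
        rw [hmc]
        have : (2 : ℝ) * j ≠ 0 := by rw [← hmc]; exact hmR
        field_simp
      rw [h3, Real.sin_pi]
  · intro j hj; simp only [Finset.mem_Icc] at hj ⊢
    by_cases h : j = m <;> simp [h] <;> omega
  · intro j hj; simp only [Finset.mem_Icc] at hj
    show (if (if j = m then m else m - j) = m then m else m - (if j = m then m else m - j)) = j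
    by_cases h : j = m
    · simp [h]
    · rw [if_neg h, if_neg (by omega : m - j ≠ m)]; omega

/-- For odd `ν ≥ 1`, the Sato–Tate measure of
`I' = ⋃_{j=1}^{(ν+1)/2} ((2j-1)π/(ν+1), 2jπ/(ν+1))` equals `1/2`. -/
theorem sato_tate_measure_I' (ν : ℕ) (hν : Odd ν) (hpos : 0 < ν) :
    (2 / Real.pi) * ∑ j ∈ Finset.Icc 1 ((ν + 1) / 2),
      ∫ θ in ((2 * (j : ℝ) - 1) * Real.pi / ((ν : ℝ) + 1))..
             (2 * (j : ℝ) * Real.pi / ((ν : ℝ) + 1)),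
        Real.sin θ ^ 2 = 1 / 2 := by
  obtain ⟨k, hk⟩ := hν
  set m : ℕ := k + 1 with hmdef
  have hd : (ν + 1) / 2 = m := by omega
  have hm : 0 < m := Nat.succ_pos k
  have hmR : (m : ℝ) ≠ 0 := Nat.cast_ne_zero.2 hm.ne'
  have hπ : Real.pi ≠ 0 := Real.pi_ne_zero
  have hcast : ((ν : ℕ) : ℝ) + 1 = 2 * (m : ℝ) := by
    have h : ν + 1 = 2 * m := by omega
    exact_mod_cast congrArg (Nat.cast (R := ℝ)) h
  rw [hd]
  have key : ∀ j ∈ Finset.Icc 1 m,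
      (∫ θ in ((2 * (j : ℝ) - 1) * Real.pi / ((ν : ℝ) + 1))..
             (2 * (j : ℝ) * Real.pi / ((ν : ℝ) + 1)), Real.sin θ ^ 2)
      = Real.sin ((2 * (j : ℝ) - 1) * Real.pi / m) / 4
        - Real.sin (2 * (j : ℝ) * Real.pi / m) / 4 + Real.pi / (4 * m) := by
    intro j hj
    rw [integral_sin_sq, hcast]
    have h1 : Real.sin ((2 * (j : ℝ) - 1) * Real.pi / (2 * m))
        * Real.cos ((2 * (j : ℝ) - 1) * Real.pi / (2 * m))
        = Real.sin ((2 * (j : ℝ) - 1) * Real.pi / m) / 2 := by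
      rw [show (2 * (j : ℝ) - 1) * Real.pi / m
          = 2 * ((2 * (j : ℝ) - 1) * Real.pi / (2 * m)) by field_simp,
        Real.sin_two_mul]; ring
    have h2 : Real.sin (2 * (j : ℝ) * Real.pi / (2 * m))
        * Real.cos (2 * (j : ℝ) * Real.pi / (2 * m))
        = Real.sin (2 * (j : ℝ) * Real.pi / m) / 2 := by
      rw [show 2 * (j : ℝ) * Real.pi / m
          = 2 * (2 * (j : ℝ) * Real.pi / (2 * m)) by field_simp,
        Real.sin_two_mul]; ring
    rw [h1, h2]
    field_simp
    ring
  rw [Finset.sum_congr rfl key, Finset.sum_add_distrib, Finset.sum_sub_distrib,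
    ← Finset.sum_div, ← Finset.sum_div, sumA m hm, sumB m hm,
    Finset.sum_const, Nat.card_Icc]
  simp only [Nat.add_sub_cancel, nsmul_eq_mul, zero_div, sub_zero, zero_add]
  field_simp
  ring
end

section
/- Let ν be an odd positive integer. For ε ∈ (0, 1) let m(ε) = (2/π) · Σ_{j=1}^{(ν+1)/2} ∫_{((2j−2)π + arcsin ε)/(ν+1)}^{((2j−1)π − arcsin ε)/(ν+1)} sin²θ dθ be the Sato–Tate measure of the set I_ε = ⋃_{j=1}^{(ν+1)/2} ( ((2j−2)π + arcsin ε)/(ν+1), ((2j−1)π − arcsin ε)/(ν+1) ). Then m(ε) tends to 1/2 as ε tends to 0 from the right. -/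
open Filter

section SatoTateAux
open Real Finset

lemma sum_sin_even (m : ℕ) (hm : 1 ≤ m) :
    ∑ j ∈ Finset.Icc 1 m, Real.sin ((2 * (j : ℝ) - 2) * Real.pi / m) = 0 := by
  refine Finset.sum_involution (fun j _ => if j = 1 then 1 else m + 2 - j) ?_ ?_ ?_ ?_
  · intro j hj
    simp only [Finset.mem_Icc] at hj
    beta_reduce
    by_cases h1 : j = 1
    · rw [if_pos h1, h1]; norm_num
    · rw [if_neg h1]
      have hj2 : 2 ≤ j := by omega
      have hc : ((m + 2 - j : ℕ) : ℝ) = (m : ℝ) + 2 - j := by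
        push_cast [Nat.cast_sub (by omega : j ≤ m + 2)]; ring
      rw [hc]
      have : (2 * ((m : ℝ) + 2 - j) - 2) * Real.pi / m
          = 2 * Real.pi - (2 * (j : ℝ) - 2) * Real.pi / m := by
        have hm0 : (m : ℝ) ≠ 0 := by positivity
        field_simp; ring
      rw [this, Real.sin_sub, Real.sin_two_pi, Real.cos_two_pi]
      ring
  · intro j hj hne
    simp only [Finset.mem_Icc] at hj
    beta_reduce
    by_cases h1 : j = 1
    · exfalso; apply hne
      rw [h1]; norm_num
    · rw [if_neg h1]
      intro h
      apply hne
      have hle : j ≤ m + 2 := by omega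
      have h2j : 2 * j = m + 2 := by omega
      have harg : (2 * (j : ℝ) - 2) * Real.pi / m = Real.pi := by
        have hm0 : (m : ℝ) ≠ 0 := by positivity
        have hjm : (2 * (j : ℝ) - 2) = m := by
          have := congrArg (fun x : ℕ => (x : ℝ)) h2j
          push_cast at this ⊢; linarith
        rw [hjm]; field_simp
      rw [harg, Real.sin_pi]
  · intro j hj
    simp only [Finset.mem_Icc] at hj ⊢
    split <;> omega
  · intro j hj
    simp only [Finset.mem_Icc] at hj
    beta_reduce
    split_ifs <;> omega

lemma sum_sin_odd (m : ℕ) (hm : 1 ≤ m) :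
    ∑ j ∈ Finset.Icc 1 m, Real.sin ((2 * (j : ℝ) - 1) * Real.pi / m) = 0 := by
  refine Finset.sum_involution (fun j _ => m + 1 - j) ?_ ?_ ?_ ?_
  · intro j hj
    simp only [Finset.mem_Icc] at hj
    beta_reduce
    have hc : ((m + 1 - j : ℕ) : ℝ) = (m : ℝ) + 1 - j := by
      push_cast [Nat.cast_sub (by omega : j ≤ m + 1)]; ring
    rw [hc]
    have : (2 * ((m : ℝ) + 1 - j) - 1) * Real.pi / m
        = 2 * Real.pi - (2 * (j : ℝ) - 1) * Real.pi / m := by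
      have hm0 : (m : ℝ) ≠ 0 := by positivity
      field_simp; ring
    rw [this, Real.sin_sub, Real.sin_two_pi, Real.cos_two_pi]
    ring
  · intro j hj hne
    simp only [Finset.mem_Icc] at hj
    beta_reduce
    intro h
    apply hne
    have h2j : 2 * j = m + 1 := by omega
    have harg : (2 * (j : ℝ) - 1) * Real.pi / m = Real.pi := by
      have hm0 : (m : ℝ) ≠ 0 := by positivity
      have hjm : (2 * (j : ℝ) - 1) = m := by
        have := congrArg (fun x : ℕ => (x : ℝ)) h2j
        push_cast at this ⊢; linarith
      rw [hjm]; field_simp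
    rw [harg, Real.sin_pi]
  · intro j hj
    simp only [Finset.mem_Icc] at hj ⊢
    omega
  · intro j hj
    simp only [Finset.mem_Icc] at hj
    beta_reduce
    omega

end SatoTateAux

/-- For odd `ν ≥ 1`, the Sato–Tate measure of
`I_ε = ⋃_{j=1}^{(ν+1)/2} (((2j-2)π + arcsin ε)/(ν+1), ((2j-1)π - arcsin ε)/(ν+1))`
tends to `1/2` as `ε → 0⁺`. -/
theorem sato_tate_measure_I_eps_tendsto (ν : ℕ) (hν : Odd ν) (hpos : 0 < ν) :
    Tendsto
      (fun ε : ℝ =>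
        (2 / Real.pi) * ∑ j ∈ Finset.Icc 1 ((ν + 1) / 2),
          ∫ θ in (((2 * (j : ℝ) - 2) * Real.pi + Real.arcsin ε) / ((ν : ℝ) + 1))..
                 (((2 * (j : ℝ) - 1) * Real.pi - Real.arcsin ε) / ((ν : ℝ) + 1)),
            Real.sin θ ^ 2)
      (nhdsWithin 0 (Set.Ioo (0 : ℝ) 1)) (nhds (1 / 2)) := by
  have hπ := Real.pi_pos
  obtain ⟨k, hk⟩ := hν
  set m := (ν + 1) / 2 with hmdef
  have hm2 : ν + 1 = 2 * m := by omega
  have hm1 : 1 ≤ m := by omega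
  have hmR : ((ν : ℝ) + 1) = 2 * (m : ℝ) := by exact_mod_cast hm2
  have hm0 : (m : ℝ) ≠ 0 := by positivity
  set F : ℝ → ℝ := fun x =>
    (2 / Real.pi) * ∑ j ∈ Finset.Icc 1 m,
      ((Real.sin (((2 * (j : ℝ) - 2) * Real.pi + x) / ((ν : ℝ) + 1)) *
          Real.cos (((2 * (j : ℝ) - 2) * Real.pi + x) / ((ν : ℝ) + 1)) -
        Real.sin (((2 * (j : ℝ) - 1) * Real.pi - x) / ((ν : ℝ) + 1)) *
          Real.cos (((2 * (j : ℝ) - 1) * Real.pi - x) / ((ν : ℝ) + 1)) +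
        ((2 * (j : ℝ) - 1) * Real.pi - x) / ((ν : ℝ) + 1) -
        ((2 * (j : ℝ) - 2) * Real.pi + x) / ((ν : ℝ) + 1)) / 2) with hF
  have hfun : (fun ε : ℝ =>
      (2 / Real.pi) * ∑ j ∈ Finset.Icc 1 m,
        ∫ θ in (((2 * (j : ℝ) - 2) * Real.pi + Real.arcsin ε) / ((ν : ℝ) + 1))..
               (((2 * (j : ℝ) - 1) * Real.pi - Real.arcsin ε) / ((ν : ℝ) + 1)),
          Real.sin θ ^ 2) = fun ε => F (Real.arcsin ε) := by
    funext ε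
    simp only [hF, integral_sin_sq]
  rw [hfun]
  have hcont : Continuous fun ε : ℝ => F (Real.arcsin ε) := by
    exact (show Continuous F by rw [hF]; fun_prop).comp Real.continuous_arcsin
  have hF0 : F (Real.arcsin 0) = 1 / 2 := by
    rw [Real.arcsin_zero, hF]
    simp only [add_zero, sub_zero]
    have hterm : ∀ j ∈ Finset.Icc 1 m,
        ((Real.sin ((2 * (j : ℝ) - 2) * Real.pi / ((ν : ℝ) + 1)) *
            Real.cos ((2 * (j : ℝ) - 2) * Real.pi / ((ν : ℝ) + 1)) -
          Real.sin ((2 * (j : ℝ) - 1) * Real.pi / ((ν : ℝ) + 1)) *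
            Real.cos ((2 * (j : ℝ) - 1) * Real.pi / ((ν : ℝ) + 1)) +
          (2 * (j : ℝ) - 1) * Real.pi / ((ν : ℝ) + 1) -
          (2 * (j : ℝ) - 2) * Real.pi / ((ν : ℝ) + 1)) / 2)
        = Real.pi / (4 * m) + Real.sin ((2 * (j : ℝ) - 2) * Real.pi / m) / 4
            - Real.sin ((2 * (j : ℝ) - 1) * Real.pi / m) / 4 := by
      intro j hj
      have ha : Real.sin ((2 * (j : ℝ) - 2) * Real.pi / ((ν : ℝ) + 1)) *
          Real.cos ((2 * (j : ℝ) - 2) * Real.pi / ((ν : ℝ) + 1))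
          = Real.sin ((2 * (j : ℝ) - 2) * Real.pi / m) / 2 := by
        have : (2 * (j : ℝ) - 2) * Real.pi / (m : ℝ)
            = 2 * ((2 * (j : ℝ) - 2) * Real.pi / ((ν : ℝ) + 1)) := by
          rw [hmR]; field_simp
        rw [this, Real.sin_two_mul]; ring
      have hb : Real.sin ((2 * (j : ℝ) - 1) * Real.pi / ((ν : ℝ) + 1)) *
          Real.cos ((2 * (j : ℝ) - 1) * Real.pi / ((ν : ℝ) + 1))
          = Real.sin ((2 * (j : ℝ) - 1) * Real.pi / m) / 2 := by
        have : (2 * (j : ℝ) - 1) * Real.pi / (m : ℝ)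
            = 2 * ((2 * (j : ℝ) - 1) * Real.pi / ((ν : ℝ) + 1)) := by
          rw [hmR]; field_simp
        rw [this, Real.sin_two_mul]; ring
      rw [ha, hb, hmR]
      field_simp
      ring
    rw [Finset.sum_congr rfl hterm]
    rw [Finset.sum_sub_distrib, Finset.sum_add_distrib, Finset.sum_const,
      Nat.card_Icc, ← Finset.sum_div, ← Finset.sum_div,
      sum_sin_even m hm1, sum_sin_odd m hm1]
    simp only [Nat.add_sub_cancel, nsmul_eq_mul, zero_div, add_zero, sub_zero]
    field_simp
    ring
  rw [← hF0]
  exact (hcont.tendsto 0).mono_left nhdsWithin_le_nhds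
end
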